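/- Let {1,…,N} be partitioned into K pairwise disjoint nonempty vertex sets V₁,…,V_K, let g₁,…,g_K ∈ ℝ^N with G_k = diag(g_k), and assume there exist constants δ, μ, γ > 0 such that |g_m(i)| ≤ δ for all i ∈ V_k with k ≠ m, and μ ≤ g_k(i) ≤ γ for all i ∈ V_k. Let u₁,…,u_N ∈ ℝ^N be an orthonormal set, let h₁,…,h_K ∈ ℝ^N with ‖h_k‖₂ = 1, and assume Σ_{i=1}^N |h_k(i) h_m(i)| ≤ ε for all k ≠ m, for some ε ≥ 0. Set C_{km} = Σ_{l=1}^N h_k(l) h_m(l) u_l u_lᵀ and C_x = Σ_{k=1}^K Σ_{m=1}^K G_k C_{km} G_mᵀ. Then (1/(γ⁴ N²)) Σ_{k=1}^K Σ_{m≠k} Σ_{(i,j) ∈ V_k × V_m} |C_x(i,j)|² ≤ (2/N) K (K−1) ε² + (2/N²) · (Σ_{k=1}^K Σ_{m≠k} |V_k| · |V_m|) · (2(K−1)(δ/μ) + (K−1)²(δ/μ)²)². -/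

import Mathlib

open Matrix Finset

private lemma abs_mul3_le {x y z X Z : ℝ} (hx : |x| ≤ X) (hy : |y| ≤ 1) (hz : |z| ≤ Z) :
    |x * y * z| ≤ X * Z := by
  have h1 : |x * y| ≤ X := by
    calc |x * y| = |x| * |y| := abs_mul _ _
      _ ≤ X * 1 := mul_le_mul hx hy (abs_nonneg _) ((abs_nonneg x).trans hx)
      _ = X := mul_one X
  calc |x * y * z| = |x * y| * |z| := abs_mul _ _
    _ ≤ X * Z := mul_le_mul h1 hz (abs_nonneg _) ((abs_nonneg _).trans h1)

set_option maxHeartbeats 2000000 in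
/-- Theorem 3: under the membership localization and spectral separation assumptions,
the average squared cross-covariance of the LSGP `x` across different subgraphs is
bounded by `(2/N) K(K−1) ε² + (2/N²) |⋃_{k≠m} V_k × V_m| (2(K−1)(δ/μ) + (K−1)²(δ/μ)²)²`. -/
theorem lsgp_average_cross_covariance_bound
    {N K : ℕ} (V : Fin K → Finset (Fin N))
    (hdisj : ∀ k m, k ≠ m → Disjoint (V k) (V m))
    (hne : ∀ k, (V k).Nonempty)
    (hcover : ∀ i : Fin N, ∃ k, i ∈ V k)
    (g : Fin K → Fin N → ℝ)
    (δ μ γ : ℝ) (hδ : 0 < δ) (hμ : 0 < μ) (hγ : 0 < γ)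
    (hoff : ∀ k m, k ≠ m → ∀ i ∈ V k, |g m i| ≤ δ)
    (hlow : ∀ k, ∀ i ∈ V k, μ ≤ g k i)
    (hhigh : ∀ k, ∀ i ∈ V k, g k i ≤ γ)
    (u : Fin N → Fin N → ℝ)
    (hu : ∀ i j, u i ⬝ᵥ u j = if i = j then (1 : ℝ) else 0)
    (h : Fin K → Fin N → ℝ) (hh : ∀ k, ∑ i, (h k i) ^ 2 = 1)
    (ε : ℝ) (hε : 0 ≤ ε)
    (hsep : ∀ k m, k ≠ m → ∑ i, |h k i * h m i| ≤ ε)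
    (Ckm : Fin K → Fin K → Matrix (Fin N) (Fin N) ℝ)
    (hCkm : ∀ k m, Ckm k m = ∑ l, (h k l * h m l) • Matrix.vecMulVec (u l) (u l))
    (Cx : Matrix (Fin N) (Fin N) ℝ)
    (hCx : Cx = ∑ k, ∑ m, Matrix.diagonal (g k) * Ckm k m * (Matrix.diagonal (g m))ᵀ) :
    (1 / (γ ^ 4 * (N : ℝ) ^ 2)) *
        ∑ k, ∑ m ∈ Finset.univ.erase k, ∑ i ∈ V k, ∑ j ∈ V m, |Cx i j| ^ 2
      ≤ (2 / (N : ℝ)) * K * ((K : ℝ) - 1) * ε ^ 2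
        + (2 / (N : ℝ) ^ 2) *
            (∑ k, ∑ m ∈ Finset.univ.erase k, ((V k).card : ℝ) * ((V m).card : ℝ)) *
            (2 * ((K : ℝ) - 1) * (δ / μ) + ((K : ℝ) - 1) ^ 2 * (δ / μ) ^ 2) ^ 2 := by
  classical
  -- dispose of the degenerate case K = 0
  rcases Nat.eq_zero_or_pos K with hK0 | hKpos
  · subst hK0
    simp
  obtain ⟨i0, hi0⟩ := hne ⟨0, hKpos⟩
  have hN : 0 < N := i0.pos
  have hK1 : (1 : ℝ) ≤ (K : ℝ) := by exact_mod_cast hKpos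
  have hKm1 : (0 : ℝ) ≤ (K : ℝ) - 1 := by linarith
  have hμγ : μ ≤ γ := le_trans (hlow _ _ hi0) (hhigh _ _ hi0)
  obtain ⟨D, hD⟩ : ∃ D : ℝ, D = δ / μ := ⟨_, rfl⟩
  obtain ⟨B, hBdef⟩ : ∃ B : ℝ,
      B = 2 * ((K : ℝ) - 1) * D + ((K : ℝ) - 1) ^ 2 * D ^ 2 := ⟨_, rfl⟩
  rw [← hD, ← hBdef]
  have hD0 : 0 ≤ D := by rw [hD]; exact le_of_lt (div_pos hδ hμ)
  have hδD : δ ≤ γ * D := by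
    rw [hD, mul_div_assoc' γ δ μ, le_div_iff₀ hμ]
    nlinarith
  have hB0 : 0 ≤ B := by
    rw [hBdef]
    exact add_nonneg (mul_nonneg (mul_nonneg (by norm_num) hKm1) hD0)
      (mul_nonneg (sq_nonneg _) (sq_nonneg _))
  -- entry formulas
  have centry : ∀ k m i j, Ckm k m i j = ∑ l, (h k l * h m l) * (u l i * u l j) := by
    intro k m i j
    rw [hCkm]
    simp [Matrix.sum_apply, Matrix.vecMulVec_apply, mul_assoc]
  have cxentry : ∀ i j, Cx i j = ∑ k, ∑ m, g k i * Ckm k m i j * g m j := by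
    intro i j
    rw [hCx]
    simp [Matrix.sum_apply, Matrix.diagonal_transpose, Matrix.diagonal_mul, Matrix.mul_diagonal]
  -- |u l i| ≤ 1
  have hu' : ∀ l l', (∑ i, u l i * u l' i) = if l = l' then (1:ℝ) else 0 := by
    intro l l'; simpa [dotProduct] using hu l l'
  have hu1 : ∀ l i, |u l i| ≤ 1 := by
    intro l i
    have h1 : (u l i) ^ 2 ≤ 1 := by
      have hle : (u l i) ^ 2 ≤ ∑ j, (u l j) ^ 2 :=
        Finset.single_le_sum (f := fun j => (u l j) ^ 2) (fun j _ => sq_nonneg _) (mem_univ i)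
      have heq : (∑ j, (u l j) ^ 2) = 1 := by simpa [sq] using hu' l l
      linarith [heq ▸ hle]
    nlinarith [abs_nonneg (u l i), sq_abs (u l i)]
  -- Cauchy-Schwarz : sum of |h k * h m| ≤ 1
  have hone : ∀ k m, (∑ l, |h k l * h m l|) ≤ 1 := by
    intro k m
    have cs := Finset.sum_mul_sq_le_sq_mul_sq Finset.univ (fun l => |h k l|) (fun l => |h m l|)
    simp only [← abs_mul, sq_abs] at cs
    have h2 : (∑ l, |h k l * h m l|) ^ 2 ≤ 1 := by
      rw [hh k, hh m] at cs; simpa using cs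
    nlinarith [Finset.sum_nonneg (fun l (_ : l ∈ Finset.univ) => abs_nonneg (h k l * h m l))]
  have cabs : ∀ k m i j, |Ckm k m i j| ≤ ∑ l, |h k l * h m l| := by
    intro k m i j
    rw [centry]
    refine (Finset.abs_sum_le_sum_abs _ _).trans (Finset.sum_le_sum fun l _ => ?_)
    rw [abs_mul]
    have : |u l i * u l j| ≤ 1 := by
      rw [abs_mul]
      exact mul_le_one₀ (hu1 l i) (abs_nonneg _) (hu1 l j)
    calc |h k l * h m l| * |u l i * u l j| ≤ |h k l * h m l| * 1 :=
          mul_le_mul_of_nonneg_left this (abs_nonneg _)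
      _ = _ := mul_one _
  have cb1 : ∀ k m i j, |Ckm k m i j| ≤ 1 := fun k m i j => (cabs k m i j).trans (hone k m)
  -- Frobenius identity
  have frob : ∀ a b, (∑ i, ∑ j, (Ckm a b i j) ^ 2) = ∑ l, (h a l * h b l) ^ 2 := by
    intro a b
    set c : Fin N → ℝ := fun l => h a l * h b l with hc
    have expand : ∀ i j : Fin N, (Ckm a b i j) ^ 2
        = ∑ l, ∑ l', (c l * c l' * (u l i * u l' i)) * (u l j * u l' j) := by
      intro i j
      rw [centry, sq, Finset.sum_mul_sum]
      refine Finset.sum_congr rfl fun l _ => Finset.sum_congr rfl fun l' _ => by ring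
    calc (∑ i, ∑ j, (Ckm a b i j) ^ 2)
        = ∑ i, ∑ j, ∑ l, ∑ l', (c l * c l' * (u l i * u l' i)) * (u l j * u l' j) := by
          simp only [expand]
      _ = ∑ i, ∑ l, ∑ j, ∑ l', (c l * c l' * (u l i * u l' i)) * (u l j * u l' j) := by
          exact Finset.sum_congr rfl fun i _ => Finset.sum_comm
      _ = ∑ i, ∑ l, ∑ l', ∑ j, (c l * c l' * (u l i * u l' i)) * (u l j * u l' j) := by
          exact Finset.sum_congr rfl fun i _ => Finset.sum_congr rfl fun l _ => Finset.sum_comm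
      _ = ∑ l, ∑ i, ∑ l', ∑ j, (c l * c l' * (u l i * u l' i)) * (u l j * u l' j) :=
          Finset.sum_comm
      _ = ∑ l, ∑ l', ∑ i, ∑ j, (c l * c l' * (u l i * u l' i)) * (u l j * u l' j) := by
          exact Finset.sum_congr rfl fun l _ => Finset.sum_comm
      _ = ∑ l, ∑ l', (c l * c l') * ((∑ i, u l i * u l' i) * (∑ j, u l j * u l' j)) := by
          refine Finset.sum_congr rfl fun l _ => Finset.sum_congr rfl fun l' _ => ?_
          rw [Finset.sum_mul_sum, Finset.mul_sum]
          refine Finset.sum_congr rfl fun i _ => ?_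
          rw [Finset.mul_sum]
          exact Finset.sum_congr rfl fun j _ => by ring
      _ = ∑ l, (c l) ^ 2 := by
          refine Finset.sum_congr rfl fun l _ => ?_
          simp only [hu']
          rw [Finset.sum_eq_single l]
          · simp [sq]
          · intro l' _ hne'
            simp [Ne.symm hne', if_neg]
          · intro habs; exact absurd (mem_univ l) habs
  -- per pair bound
  have pair : ∀ a b : Fin K, b ≠ a →
      (∑ i ∈ V a, ∑ j ∈ V b, |Cx i j| ^ 2)
        ≤ 2 * γ ^ 4 * ε ^ 2 + 2 * γ ^ 4 * B ^ 2 * (((V a).card : ℝ) * ((V b).card : ℝ)) := by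
    intro a b hba
    have hcardK : ((Finset.univ.erase b).card : ℝ) = (K : ℝ) - 1 := by
      rw [Finset.card_erase_of_mem (mem_univ b), Finset.card_univ, Fintype.card_fin,
        Nat.cast_sub hKpos, Nat.cast_one]
    have hcardKa : ((Finset.univ.erase a).card : ℝ) = (K : ℝ) - 1 := by
      rw [Finset.card_erase_of_mem (mem_univ a), Finset.card_univ, Fintype.card_fin,
        Nat.cast_sub hKpos, Nat.cast_one]
    have key : ∀ i ∈ V a, ∀ j ∈ V b,
        |Cx i j| ^ 2 ≤ 2 * γ ^ 4 * (Ckm a b i j) ^ 2 + 2 * γ ^ 4 * B ^ 2 := by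
      intro i hi j hj
      have hga : |g a i| ≤ γ := by
        rw [abs_le]
        exact ⟨by linarith [hlow a i hi], hhigh a i hi⟩
      have hgb : |g b j| ≤ γ := by
        rw [abs_le]
        exact ⟨by linarith [hlow b j hj], hhigh b j hj⟩
      have hgmj : ∀ m, m ≠ b → |g m j| ≤ δ := fun m hm => hoff b m (Ne.symm hm) j hj
      have hgki : ∀ k, k ≠ a → |g k i| ≤ δ := fun k hk => hoff a k (Ne.symm hk) i hi
      obtain ⟨f, hf⟩ : ∃ f : Fin K → Fin K → ℝ,
          f = fun k m => g k i * Ckm k m i j * g m j := ⟨_, rfl⟩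
      have hfdef : ∀ k m, f k m = g k i * Ckm k m i j * g m j := fun k m => by rw [hf]
      obtain ⟨M, hM⟩ : ∃ M : ℝ, M = f a b := ⟨_, rfl⟩
      obtain ⟨R, hR⟩ : ∃ R : ℝ, R = (∑ m ∈ Finset.univ.erase b, f a m)
          + ∑ k ∈ Finset.univ.erase a, ∑ m, f k m := ⟨_, rfl⟩
      have hsplit : Cx i j = M + R := by
        rw [cxentry i j, hR, hM]
        simp only [← hfdef]
        rw [← Finset.add_sum_erase Finset.univ (fun k => ∑ m, f k m) (mem_univ a),
          ← Finset.add_sum_erase Finset.univ (fun m => f a m) (mem_univ b), add_assoc]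
      -- bound on R
      have hR1 : |∑ m ∈ Finset.univ.erase b, f a m| ≤ ((K : ℝ) - 1) * (γ * δ) := by
        calc |∑ m ∈ Finset.univ.erase b, f a m| ≤ ∑ m ∈ Finset.univ.erase b, |f a m| :=
            Finset.abs_sum_le_sum_abs _ _
          _ ≤ ∑ m ∈ Finset.univ.erase b, γ * δ := by
              refine Finset.sum_le_sum fun m hm => ?_
              rw [hfdef]
              exact abs_mul3_le hga (cb1 a m i j) (hgmj m (Finset.ne_of_mem_erase hm))
          _ = ((K : ℝ) - 1) * (γ * δ) := by rw [Finset.sum_const, nsmul_eq_mul, hcardK]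
      have hR2 : |∑ k ∈ Finset.univ.erase a, ∑ m, f k m|
          ≤ ((K : ℝ) - 1) * (δ * γ + ((K : ℝ) - 1) * (δ * δ)) := by
        calc |∑ k ∈ Finset.univ.erase a, ∑ m, f k m|
            ≤ ∑ k ∈ Finset.univ.erase a, |∑ m, f k m| := Finset.abs_sum_le_sum_abs _ _
          _ ≤ ∑ k ∈ Finset.univ.erase a, (δ * γ + ((K : ℝ) - 1) * (δ * δ)) := by
              refine Finset.sum_le_sum fun k hk => ?_
              have hka := Finset.ne_of_mem_erase hk
              calc |∑ m, f k m| = |f k b + ∑ m ∈ Finset.univ.erase b, f k m| := by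
                    rw [Finset.add_sum_erase Finset.univ (fun m => f k m) (mem_univ b)]
                _ ≤ |f k b| + |∑ m ∈ Finset.univ.erase b, f k m| := abs_add_le _ _
                _ ≤ δ * γ + ((K : ℝ) - 1) * (δ * δ) := by
                    have h1 : |f k b| ≤ δ * γ := by
                      rw [hfdef]
                      exact abs_mul3_le (hgki k hka) (cb1 k b i j) hgb
                    have h2 : |∑ m ∈ Finset.univ.erase b, f k m|
                        ≤ ((K : ℝ) - 1) * (δ * δ) := by
                      calc |∑ m ∈ Finset.univ.erase b, f k m|
                          ≤ ∑ m ∈ Finset.univ.erase b, |f k m| := Finset.abs_sum_le_sum_abs _ _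
                        _ ≤ ∑ m ∈ Finset.univ.erase b, δ * δ := by
                            refine Finset.sum_le_sum fun m hm => ?_
                            rw [hfdef]
                            exact abs_mul3_le (hgki k hka) (cb1 k m i j)
                              (hgmj m (Finset.ne_of_mem_erase hm))
                        _ = ((K : ℝ) - 1) * (δ * δ) := by
                            rw [Finset.sum_const, nsmul_eq_mul, hcardK]
                    linarith
          _ = ((K : ℝ) - 1) * (δ * γ + ((K : ℝ) - 1) * (δ * δ)) := by
              rw [Finset.sum_const, nsmul_eq_mul, hcardKa]
      have hRB : |R| ≤ γ ^ 2 * B := by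
        have habs : |R| ≤ ((K : ℝ) - 1) * (γ * δ)
            + ((K : ℝ) - 1) * (δ * γ + ((K : ℝ) - 1) * (δ * δ)) := by
          rw [hR]
          exact (abs_add_le _ _).trans (add_le_add hR1 hR2)
        have e1 : γ * δ ≤ γ * (γ * D) := mul_le_mul_of_nonneg_left hδD hγ.le
        have e2 : δ * δ ≤ (γ * D) * (γ * D) :=
          mul_le_mul hδD hδD hδ.le (by positivity)
        have p1 : 0 ≤ ((K : ℝ) - 1) * (γ * (γ * D) - γ * δ) :=
          mul_nonneg hKm1 (by linarith)
        have p2 : 0 ≤ (((K : ℝ) - 1) * ((K : ℝ) - 1)) * ((γ * D) * (γ * D) - δ * δ) :=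
          mul_nonneg (mul_nonneg hKm1 hKm1) (by linarith)
        rw [hBdef]
        linarith [p1, p2, habs]
      -- bound on M
      have hMC : |M| ≤ γ ^ 2 * |Ckm a b i j| := by
        have h1 : |g a i| * |Ckm a b i j| ≤ γ * |Ckm a b i j| :=
          mul_le_mul_of_nonneg_right hga (abs_nonneg _)
        have h2 : |g a i| * |Ckm a b i j| * |g b j| ≤ (γ * |Ckm a b i j|) * γ :=
          mul_le_mul h1 hgb (abs_nonneg _) (mul_nonneg hγ.le (abs_nonneg _))
        calc |M| = |g a i| * |Ckm a b i j| * |g b j| := by rw [hM, hfdef, abs_mul, abs_mul]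
          _ ≤ (γ * |Ckm a b i j|) * γ := h2
          _ = γ ^ 2 * |Ckm a b i j| := by ring
      have hM2 : M ^ 2 ≤ γ ^ 4 * (Ckm a b i j) ^ 2 := by
        have h1 : M ^ 2 ≤ (γ ^ 2 * |Ckm a b i j|) ^ 2 := by
          rw [← sq_abs M]
          exact pow_le_pow_left₀ (abs_nonneg _) hMC 2
        have h2 : (γ ^ 2 * |Ckm a b i j|) ^ 2 = γ ^ 4 * (Ckm a b i j) ^ 2 := by
          rw [mul_pow, sq_abs]; ring
        linarith [h1, h2.ge, h2.le]
      have hR2' : R ^ 2 ≤ γ ^ 4 * B ^ 2 := by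
        have h1 : R ^ 2 ≤ (γ ^ 2 * B) ^ 2 := by
          rw [← sq_abs R]
          exact pow_le_pow_left₀ (abs_nonneg _) hRB 2
        have h2 : (γ ^ 2 * B) ^ 2 = γ ^ 4 * B ^ 2 := by ring
        linarith
      calc |Cx i j| ^ 2 = (M + R) ^ 2 := by rw [sq_abs, hsplit]
        _ ≤ 2 * M ^ 2 + 2 * R ^ 2 := by nlinarith [sq_nonneg (M - R)]
        _ ≤ 2 * γ ^ 4 * (Ckm a b i j) ^ 2 + 2 * γ ^ 4 * B ^ 2 := by linarith [hM2, hR2']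
    -- sum the pointwise bound
    have hCsum : (∑ i ∈ V a, ∑ j ∈ V b, (Ckm a b i j) ^ 2) ≤ ε ^ 2 := by
      have hsub : (∑ i ∈ V a, ∑ j ∈ V b, (Ckm a b i j) ^ 2)
          ≤ ∑ i, ∑ j, (Ckm a b i j) ^ 2 := by
        have step1 : (∑ i ∈ V a, ∑ j ∈ V b, (Ckm a b i j) ^ 2)
            ≤ ∑ i ∈ V a, ∑ j, (Ckm a b i j) ^ 2 :=
          Finset.sum_le_sum fun i _ =>
            Finset.sum_le_sum_of_subset_of_nonneg (Finset.subset_univ _)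
              fun j _ _ => sq_nonneg _
        have step2 : (∑ i ∈ V a, ∑ j, (Ckm a b i j) ^ 2)
            ≤ ∑ i, ∑ j, (Ckm a b i j) ^ 2 :=
          Finset.sum_le_sum_of_subset_of_nonneg (Finset.subset_univ _)
            fun i _ _ => Finset.sum_nonneg fun j _ => sq_nonneg _
        exact step1.trans step2
      have h2 : (∑ l, (h a l * h b l) ^ 2) ≤ (∑ l, |h a l * h b l|) ^ 2 := by
        have := Finset.sum_sq_le_sq_sum_of_nonneg
          (f := fun l => |h a l * h b l|) (s := Finset.univ)
          (fun l _ => abs_nonneg _)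
        simpa [sq_abs, mul_pow] using this
      have h3 : (∑ l, |h a l * h b l|) ^ 2 ≤ ε ^ 2 := by
        have hs := hsep a b (Ne.symm hba)
        have h0 : (0:ℝ) ≤ ∑ l, |h a l * h b l| :=
          Finset.sum_nonneg fun l _ => abs_nonneg _
        nlinarith
      calc (∑ i ∈ V a, ∑ j ∈ V b, (Ckm a b i j) ^ 2) ≤ ∑ i, ∑ j, (Ckm a b i j) ^ 2 := hsub
        _ = ∑ l, (h a l * h b l) ^ 2 := frob a b
        _ ≤ ε ^ 2 := h2.trans h3
    calc (∑ i ∈ V a, ∑ j ∈ V b, |Cx i j| ^ 2)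
        ≤ ∑ i ∈ V a, ∑ j ∈ V b, (2 * γ ^ 4 * (Ckm a b i j) ^ 2 + 2 * γ ^ 4 * B ^ 2) := by
          refine Finset.sum_le_sum fun i hi => Finset.sum_le_sum fun j hj => key i hi j hj
      _ = 2 * γ ^ 4 * (∑ i ∈ V a, ∑ j ∈ V b, (Ckm a b i j) ^ 2)
          + 2 * γ ^ 4 * B ^ 2 * (((V a).card : ℝ) * ((V b).card : ℝ)) := by
          simp [Finset.sum_add_distrib, Finset.mul_sum, Finset.sum_const, nsmul_eq_mul]
          ring
      _ ≤ 2 * γ ^ 4 * ε ^ 2 + 2 * γ ^ 4 * B ^ 2 * (((V a).card : ℝ) * ((V b).card : ℝ)) := by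
          have : 2 * γ ^ 4 * (∑ i ∈ V a, ∑ j ∈ V b, (Ckm a b i j) ^ 2) ≤ 2 * γ ^ 4 * ε ^ 2 :=
            mul_le_mul_of_nonneg_left hCsum (by positivity)
          linarith
  -- assemble
  obtain ⟨P, hP⟩ : ∃ P : ℝ,
      P = ∑ k, ∑ m ∈ Finset.univ.erase k, ((V k).card : ℝ) * ((V m).card : ℝ) := ⟨_, rfl⟩
  rw [← hP]
  have hSbound : (∑ k, ∑ m ∈ Finset.univ.erase k, ∑ i ∈ V k, ∑ j ∈ V m, |Cx i j| ^ 2)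
      ≤ (K : ℝ) * ((K : ℝ) - 1) * (2 * γ ^ 4 * ε ^ 2) + 2 * γ ^ 4 * B ^ 2 * P := by
    have step : ∀ k : Fin K, (∑ m ∈ Finset.univ.erase k, ∑ i ∈ V k, ∑ j ∈ V m, |Cx i j| ^ 2)
        ≤ ((K : ℝ) - 1) * (2 * γ ^ 4 * ε ^ 2)
          + 2 * γ ^ 4 * B ^ 2 * ∑ m ∈ Finset.univ.erase k, ((V k).card : ℝ) * ((V m).card : ℝ) := by
      intro k
      have hcard : ((Finset.univ.erase k).card : ℝ) = (K : ℝ) - 1 := by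
        rw [Finset.card_erase_of_mem (mem_univ k), Finset.card_univ, Fintype.card_fin,
          Nat.cast_sub hKpos, Nat.cast_one]
      calc (∑ m ∈ Finset.univ.erase k, ∑ i ∈ V k, ∑ j ∈ V m, |Cx i j| ^ 2)
          ≤ ∑ m ∈ Finset.univ.erase k,
              (2 * γ ^ 4 * ε ^ 2 + 2 * γ ^ 4 * B ^ 2 * (((V k).card : ℝ) * ((V m).card : ℝ))) := by
            exact Finset.sum_le_sum fun m hm => pair k m (Finset.ne_of_mem_erase hm)
        _ = ((K : ℝ) - 1) * (2 * γ ^ 4 * ε ^ 2)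
            + 2 * γ ^ 4 * B ^ 2 * ∑ m ∈ Finset.univ.erase k, ((V k).card : ℝ) * ((V m).card : ℝ) := by
            rw [Finset.sum_add_distrib, Finset.sum_const, nsmul_eq_mul, hcard, ← Finset.mul_sum]
    calc (∑ k, ∑ m ∈ Finset.univ.erase k, ∑ i ∈ V k, ∑ j ∈ V m, |Cx i j| ^ 2)
        ≤ ∑ k : Fin K, (((K : ℝ) - 1) * (2 * γ ^ 4 * ε ^ 2)
            + 2 * γ ^ 4 * B ^ 2 * ∑ m ∈ Finset.univ.erase k, ((V k).card : ℝ) * ((V m).card : ℝ)) :=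
          Finset.sum_le_sum fun k _ => step k
      _ = (K : ℝ) * ((K : ℝ) - 1) * (2 * γ ^ 4 * ε ^ 2) + 2 * γ ^ 4 * B ^ 2 * P := by
          rw [Finset.sum_add_distrib, Finset.sum_const, Finset.card_univ, Fintype.card_fin,
            nsmul_eq_mul, ← Finset.mul_sum, ← hP]
          ring
  have hcoef : (0:ℝ) ≤ 1 / (γ ^ 4 * (N : ℝ) ^ 2) := by positivity
  have hNr : (0:ℝ) < (N : ℝ) := by exact_mod_cast hN
  have main := mul_le_mul_of_nonneg_left hSbound hcoef
  refine main.trans ?_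
  have heq : (1 / (γ ^ 4 * (N : ℝ) ^ 2))
      * ((K : ℝ) * ((K : ℝ) - 1) * (2 * γ ^ 4 * ε ^ 2) + 2 * γ ^ 4 * B ^ 2 * P)
      = (2 / (N : ℝ) ^ 2) * (K : ℝ) * ((K : ℝ) - 1) * ε ^ 2 + (2 / (N : ℝ) ^ 2) * P * B ^ 2 := by
    field_simp
  rw [heq]
  have hfirst : (2 / (N : ℝ) ^ 2) * (K : ℝ) * ((K : ℝ) - 1) * ε ^ 2
      ≤ (2 / (N : ℝ)) * (K : ℝ) * ((K : ℝ) - 1) * ε ^ 2 := by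
    have hdiv : 2 / (N : ℝ) ^ 2 ≤ 2 / (N : ℝ) := by
      apply div_le_div_of_nonneg_left (by norm_num) hNr
      nlinarith [hNr, (by exact_mod_cast hN : (1:ℝ) ≤ (N:ℝ))]
    have hnn : (0:ℝ) ≤ (K : ℝ) * ((K : ℝ) - 1) * ε ^ 2 := by positivity
    calc (2 / (N : ℝ) ^ 2) * (K : ℝ) * ((K : ℝ) - 1) * ε ^ 2
        = (2 / (N : ℝ) ^ 2) * ((K : ℝ) * ((K : ℝ) - 1) * ε ^ 2) := by ring
      _ ≤ (2 / (N : ℝ)) * ((K : ℝ) * ((K : ℝ) - 1) * ε ^ 2) :=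
          mul_le_mul_of_nonneg_right hdiv hnn
      _ = (2 / (N : ℝ)) * (K : ℝ) * ((K : ℝ) - 1) * ε ^ 2 := by ring
  linarith
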